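/- There exists a constant C > 0, depending only on ψ, ν₁ and ν₂, such that for all ε ∈ (0, 1/2) and all T > 10, |vol(E⁺_{T,ε}) − (1+ε)² · c_{ν₁} · c_{ν₂} · ∫₁^T ψ(r) dr| ≤ C and |vol(E⁻_{T,ε}) − (1+ε)^{-2} · c_{ν₁} · c_{ν₂} · ∫₁^T ψ(r) dr| ≤ C. -/

import Mathlib

set_option linter.unusedSectionVars false
set_option maxHeartbeats 1000000

open MeasureTheory Set Filter Pointwise

section NormAux
variable {k : ℕ} {ν : (Fin k → ℝ) → ℝ}
  (hadd : ∀ x y, ν (x + y) ≤ ν x + ν y)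
  (hsmul : ∀ (c : ℝ) x, ν (c • x) = |c| * ν x)
  (hdef : ∀ x, ν x = 0 ↔ x = 0)

include hadd hsmul hdef

lemma nu_nonneg (x) : 0 ≤ ν x := by
  have h0 : ν 0 = 0 := (hdef 0).mpr rfl
  have h1 := hadd x (-x)
  have h2 := hsmul (-1) x
  simp only [neg_one_smul, abs_neg, abs_one, one_mul] at h2
  rw [add_neg_cancel, h0, h2] at h1
  linarith

lemma nu_neg (x) : ν (-x) = ν x := by
  have := hsmul (-1) x; simpa using this

lemma nu_continuous : Continuous ν := by
  have hsub : ∀ x y, ν x - ν y ≤ ν (x - y) := by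
    intro x y
    have := hadd (x - y) y
    simp only [sub_add_cancel] at this
    linarith
  set K : ℝ := ∑ i : Fin k, ν (Pi.single i 1) with hK
  have hbound : ∀ x, ν x ≤ K * ‖x‖ := by
    intro x
    have hx : x = ∑ i : Fin k, (x i) • (Pi.single i (1:ℝ) : Fin k → ℝ) := by
      funext j
      simp [Finset.sum_apply, Pi.single_apply]
    calc ν x = ν (∑ i : Fin k, (x i) • (Pi.single i (1:ℝ) : Fin k → ℝ)) := by rw [← hx]
      _ ≤ ∑ i : Fin k, ν ((x i) • (Pi.single i (1:ℝ) : Fin k → ℝ)) :=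
          Finset.le_sum_of_subadditive ν ((hdef 0).mpr rfl).le hadd _ _
      _ = ∑ i : Fin k, |x i| * ν (Pi.single i 1) := by simp [hsmul]
      _ ≤ ∑ i : Fin k, ‖x‖ * ν (Pi.single i 1) := by
          refine Finset.sum_le_sum fun i _ => ?_
          exact mul_le_mul_of_nonneg_right (by simpa using norm_le_pi_norm x i)
            (nu_nonneg hadd hsmul hdef _)
      _ = K * ‖x‖ := by rw [← Finset.mul_sum, mul_comm]
  have hlip : LipschitzWith (Real.toNNReal K) ν := by
    refine LipschitzWith.of_dist_le_mul fun x y => ?_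
    have h1 : ν x - ν y ≤ ν (x - y) := hsub x y
    have h2 : ν y - ν x ≤ ν (x - y) := by
      have := hsub y x
      rwa [show y - x = -(x - y) by ring, nu_neg hadd hsmul hdef] at this
    have h3 : ν (x - y) ≤ K * ‖x - y‖ := hbound _
    have hK0 : 0 ≤ K := Finset.sum_nonneg fun i _ => nu_nonneg hadd hsmul hdef _
    rw [Real.dist_eq, abs_sub_le_iff, dist_eq_norm]
    constructor <;> simp only [Real.coe_toNNReal _ hK0] <;> linarith
  exact hlip.continuous

lemma nu_lower (hk : 1 ≤ k) : ∃ c : ℝ, 0 < c ∧ ∀ x, c * ‖x‖ ≤ ν x := by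
  haveI : Nonempty (Fin k) := ⟨⟨0, hk⟩⟩
  have hsph : (Metric.sphere (0 : Fin k → ℝ) 1).Nonempty :=
    NormedSpace.sphere_nonempty.mpr zero_le_one
  obtain ⟨u, hu, hmin⟩ := (isCompact_sphere (0 : Fin k → ℝ) 1).exists_isMinOn hsph
    ((nu_continuous hadd hsmul hdef).continuousOn)
  have hu1 : ‖u‖ = 1 := by simpa using hu
  have hne : u ≠ 0 := by intro h; rw [h] at hu1; simp at hu1
  refine ⟨ν u, lt_of_le_of_ne (nu_nonneg hadd hsmul hdef u)
    (fun h => hne ((hdef u).mp h.symm)), fun x => ?_⟩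
  rcases eq_or_ne x 0 with rfl | hx
  · simp [(hdef 0).mpr rfl]
  · have hnx : (0:ℝ) < ‖x‖ := norm_pos_iff.mpr hx
    have hmem : (‖x‖⁻¹ • x) ∈ Metric.sphere (0 : Fin k → ℝ) 1 := by
      simp [norm_smul, abs_of_nonneg (inv_nonneg.mpr hnx.le), inv_mul_cancel₀ hnx.ne']
    have hle : ν u ≤ ν (‖x‖⁻¹ • x) := hmin hmem
    have hval : ν (‖x‖⁻¹ • x) = ‖x‖⁻¹ * ν x := by
      rw [hsmul, abs_of_nonneg (inv_nonneg.mpr hnx.le)]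
    rw [hval] at hle
    calc ν u * ‖x‖ ≤ (‖x‖⁻¹ * ν x) * ‖x‖ := mul_le_mul_of_nonneg_right hle hnx.le
      _ = ν x := by field_simp

lemma nu_vol_pos : 0 < volume {x : Fin k → ℝ | ν x < 1} := by
  have hopen : IsOpen {x : Fin k → ℝ | ν x < 1} :=
    isOpen_lt (nu_continuous hadd hsmul hdef) continuous_const
  refine hopen.measure_pos volume ⟨0, ?_⟩
  simp [Set.mem_setOf_eq, (hdef 0).mpr rfl]

lemma nu_vol_ne_top (hk : 1 ≤ k) : volume {x : Fin k → ℝ | ν x < 1} ≠ ⊤ := by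
  obtain ⟨c, hc, hcle⟩ := nu_lower hadd hsmul hdef hk
  have hsub : {x : Fin k → ℝ | ν x < 1} ⊆ Metric.closedBall 0 c⁻¹ := by
    intro x hx
    simp only [Metric.mem_closedBall, dist_zero_right]
    have := hcle x
    rw [← le_div_iff₀' hc] at this
    calc ‖x‖ ≤ ν x / c := this
      _ ≤ 1 / c := by gcongr; exact (hx : ν x < 1).le
      _ = c⁻¹ := one_div c
  exact ((measure_mono hsub).trans_lt measure_closedBall_lt_top).ne

lemma nu_vol_pow_lt (hk : 1 ≤ k) (t : ℝ) :
    volume {x : Fin k → ℝ | ν x ^ k < t} =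
      ENNReal.ofReal t * volume {x : Fin k → ℝ | ν x < 1} := by
  rcases le_or_gt t 0 with ht | ht
  · have : {x : Fin k → ℝ | ν x ^ k < t} = ∅ := by
      ext x
      simp only [Set.mem_setOf_eq, Set.mem_empty_iff_false, iff_false, not_lt]
      exact ht.trans (pow_nonneg (nu_nonneg hadd hsmul hdef x) k)
    rw [this, ENNReal.ofReal_eq_zero.mpr ht]
    simp
  · set s : ℝ := t ^ ((k:ℝ)⁻¹) with hs
    have hs0 : 0 < s := Real.rpow_pos_of_pos ht _
    have hsk : s ^ k = t := Real.rpow_inv_natCast_pow ht.le (by omega)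
    have h1 : {x : Fin k → ℝ | ν x ^ k < t} = {x : Fin k → ℝ | ν x < s} := by
      ext x
      simp only [Set.mem_setOf_eq]
      rw [← hsk]
      exact pow_lt_pow_iff_left₀ (nu_nonneg hadd hsmul hdef x) hs0.le (by omega)
    have h2 : {x : Fin k → ℝ | ν x < s} = s • {x : Fin k → ℝ | ν x < 1} := by
      ext x
      rw [Set.mem_smul_set_iff_inv_smul_mem₀ hs0.ne']
      simp only [Set.mem_setOf_eq, hsmul, abs_of_nonneg (inv_nonneg.mpr hs0.le)]
      rw [inv_mul_lt_iff₀ hs0, mul_one]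
    rw [h1, h2, Measure.addHaar_smul_of_nonneg volume hs0.le,
      Module.finrank_fin_fun, hsk]

lemma nu_map_pow (hk : 1 ≤ k) :
    Measure.map (fun y : Fin k → ℝ => ν y ^ k) volume =
      volume {x : Fin k → ℝ | ν x < 1} • (volume.restrict (Set.Ici 0)) := by
  have hcont : Continuous fun y : Fin k → ℝ => ν y ^ k :=
    (nu_continuous hadd hsmul hdef).pow k
  have hmeas : Measurable fun y : Fin k → ℝ => ν y ^ k := hcont.measurable
  set c := volume {x : Fin k → ℝ | ν x < 1} with hc
  have hfin : c ≠ ⊤ := nu_vol_ne_top hadd hsmul hdef hk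
  have hIio : ∀ t : ℝ, Measure.map (fun y : Fin k → ℝ => ν y ^ k) volume (Set.Iio t)
      = ENNReal.ofReal t * c := by
    intro t
    rw [Measure.map_apply hmeas measurableSet_Iio]
    exact nu_vol_pow_lt hadd hsmul hdef hk t
  haveI : IsLocallyFiniteMeasure (Measure.map (fun y : Fin k → ℝ => ν y ^ k) volume) := by
    refine ⟨fun x => ⟨Set.Iio (|x| + 1), Iio_mem_nhds (lt_of_le_of_lt (le_abs_self x)
      (by linarith)), ?_⟩⟩
    rw [hIio]
    exact ENNReal.mul_lt_top ENNReal.ofReal_lt_top hfin.lt_top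
  refine Measure.ext_of_Ico _ _ (fun a b hab => ?_)
  have hdiff : (fun y : Fin k → ℝ => ν y ^ k) ⁻¹' Set.Ico a b =
      ((fun y : Fin k → ℝ => ν y ^ k) ⁻¹' Set.Iio b) \
        ((fun y : Fin k → ℝ => ν y ^ k) ⁻¹' Set.Iio a) := by
    ext y; simp only [Set.mem_preimage, Set.mem_Ico, Set.mem_diff, Set.mem_Iio, not_lt]
    tauto
  have hsubset : ((fun y : Fin k → ℝ => ν y ^ k) ⁻¹' Set.Iio a) ⊆
      ((fun y : Fin k → ℝ => ν y ^ k) ⁻¹' Set.Iio b) :=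
    fun y hy => lt_of_lt_of_le hy hab.le
  have hfina : volume ((fun y : Fin k → ℝ => ν y ^ k) ⁻¹' Set.Iio a) ≠ ⊤ := by
    rw [← Measure.map_apply hmeas measurableSet_Iio, hIio]
    exact (ENNReal.mul_lt_top ENNReal.ofReal_lt_top hfin.lt_top).ne
  rw [Measure.map_apply hmeas measurableSet_Ico, hdiff,
    measure_diff hsubset (hmeas measurableSet_Iio).nullMeasurableSet hfina]
  rw [show volume ((fun y : Fin k → ℝ => ν y ^ k) ⁻¹' Set.Iio b) = ENNReal.ofReal b * c by
      rw [← Measure.map_apply hmeas measurableSet_Iio, hIio],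
    show volume ((fun y : Fin k → ℝ => ν y ^ k) ⁻¹' Set.Iio a) = ENNReal.ofReal a * c by
      rw [← Measure.map_apply hmeas measurableSet_Iio, hIio]]
  rw [Measure.smul_apply, Measure.restrict_apply measurableSet_Ico]
  have hinter : Set.Ico a b ∩ Set.Ici 0 = Set.Ico (max a 0) b := by
    ext x; simp only [Set.mem_inter_iff, Set.mem_Ico, Set.mem_Ici, max_le_iff]
    tauto
  rw [hinter, Real.volume_Ico, smul_eq_mul]
  rw [← ENNReal.sub_mul (fun _ _ => hfin)]
  rcases le_or_gt 0 a with ha | ha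
  · rw [max_eq_left ha, ← ENNReal.ofReal_sub _ ha, mul_comm]
  · rw [max_eq_right ha.le, ENNReal.ofReal_eq_zero.mpr ha.le, tsub_zero, sub_zero, mul_comm]

end NormAux

section ProdVol
variable {m n : ℕ} {ν₁ : (Fin m → ℝ) → ℝ} {ν₂ : (Fin n → ℝ) → ℝ}
  (hm : 1 ≤ m) (hn : 1 ≤ n)
  (hν₁add : ∀ x y, ν₁ (x + y) ≤ ν₁ x + ν₁ y)
  (hν₁smul : ∀ (c : ℝ) x, ν₁ (c • x) = |c| * ν₁ x)
  (hν₁def : ∀ x, ν₁ x = 0 ↔ x = 0)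
  (hν₂add : ∀ x y, ν₂ (x + y) ≤ ν₂ x + ν₂ y)
  (hν₂smul : ∀ (c : ℝ) x, ν₂ (c • x) = |c| * ν₂ x)
  (hν₂def : ∀ x, ν₂ x = 0 ↔ x = 0)

include hm hn hν₁add hν₁smul hν₁def hν₂add hν₂smul hν₂def

lemma prod_vol_formula (g : ℝ → ℝ) (hg : Continuous g) (s : Set ℝ) (hs : MeasurableSet s) :
    volume {p : (Fin m → ℝ) × (Fin n → ℝ) | ν₁ p.1 ^ m < g (ν₂ p.2 ^ n) ∧ ν₂ p.2 ^ n ∈ s}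
      = (∫⁻ t in s ∩ Set.Ici 0, ENNReal.ofReal (g t)) *
        volume {x : Fin m → ℝ | ν₁ x < 1} * volume {y : Fin n → ℝ | ν₂ y < 1} := by
  set c₁ := volume {x : Fin m → ℝ | ν₁ x < 1} with hc₁
  set c₂ := volume {y : Fin n → ℝ | ν₂ y < 1} with hc₂
  have hcont₁ : Continuous ν₁ := nu_continuous hν₁add hν₁smul hν₁def
  have hcont₂ : Continuous ν₂ := nu_continuous hν₂add hν₂smul hν₂def
  have hr : Measurable (fun y : Fin n → ℝ => ν₂ y ^ n) := (hcont₂.pow n).measurable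
  have hmeasS : MeasurableSet
      {p : (Fin m → ℝ) × (Fin n → ℝ) | ν₁ p.1 ^ m < g (ν₂ p.2 ^ n) ∧ ν₂ p.2 ^ n ∈ s} := by
    apply MeasurableSet.inter
    · exact measurableSet_lt ((hcont₁.pow m).measurable.comp measurable_fst)
        (hg.measurable.comp (hr.comp measurable_snd))
    · exact (hr.comp measurable_snd) hs
  set F : ℝ → ENNReal := fun t => s.indicator (fun t => ENNReal.ofReal (g t) * c₁) t with hF
  have hFmeas : Measurable F :=
    ((ENNReal.measurable_ofReal.comp hg.measurable).mul_const c₁).indicator hs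
  have step1 : volume {p : (Fin m → ℝ) × (Fin n → ℝ) |
      ν₁ p.1 ^ m < g (ν₂ p.2 ^ n) ∧ ν₂ p.2 ^ n ∈ s} = ∫⁻ y, F (ν₂ y ^ n) := by
    rw [Measure.volume_eq_prod, Measure.prod_apply_symm hmeasS]
    refine lintegral_congr fun y => ?_
    by_cases hy : ν₂ y ^ n ∈ s
    · have : (fun x : Fin m → ℝ => (x, y)) ⁻¹'
          {p : (Fin m → ℝ) × (Fin n → ℝ) | ν₁ p.1 ^ m < g (ν₂ p.2 ^ n) ∧ ν₂ p.2 ^ n ∈ s}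
          = {x : Fin m → ℝ | ν₁ x ^ m < g (ν₂ y ^ n)} := by
        ext x; simp [hy]
      rw [this, nu_vol_pow_lt hν₁add hν₁smul hν₁def hm]
      exact (Set.indicator_of_mem hy (fun t => ENNReal.ofReal (g t) * c₁)).symm
    · have : (fun x : Fin m → ℝ => (x, y)) ⁻¹'
          {p : (Fin m → ℝ) × (Fin n → ℝ) | ν₁ p.1 ^ m < g (ν₂ p.2 ^ n) ∧ ν₂ p.2 ^ n ∈ s}
          = ∅ := by
        ext x; simp [hy]
      rw [this, measure_empty]
      exact (Set.indicator_of_notMem hy (fun t => ENNReal.ofReal (g t) * c₁)).symm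
  rw [step1, ← lintegral_map hFmeas hr, nu_map_pow hν₂add hν₂smul hν₂def hn,
    lintegral_smul_measure, hF]
  simp only []
  rw [lintegral_indicator hs, Measure.restrict_restrict hs,
    lintegral_mul_const c₁ (f := fun t => ENNReal.ofReal (g t)) (by fun_prop)]
  ring

lemma region_vol (g : ℝ → ℝ) (hg : Continuous g) (hgpos : ∀ t, 0 ≤ g t) {a b : ℝ}
    (ha : 0 ≤ a) (hab : a ≤ b) :
    volume {p : (Fin m → ℝ) × (Fin n → ℝ) |
        ν₁ p.1 ^ m < g (ν₂ p.2 ^ n) ∧ ν₂ p.2 ^ n ∈ Set.Ico a b}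
      = ENNReal.ofReal (∫ t in a..b, g t) *
        volume {x : Fin m → ℝ | ν₁ x < 1} * volume {y : Fin n → ℝ | ν₂ y < 1} := by
  rw [prod_vol_formula hm hn hν₁add hν₁smul hν₁def hν₂add hν₂smul hν₂def
    g hg _ measurableSet_Ico]
  have h1 : Set.Ico a b ∩ Set.Ici 0 = Set.Ico a b :=
    Set.inter_eq_left.mpr fun x hx => ha.trans hx.1
  have h2 : volume.restrict (Set.Ico a b) = volume.restrict (Set.Ioc a b) :=
    Measure.restrict_congr_set Ico_ae_eq_Ioc
  have hint : Integrable g (volume.restrict (Set.Ioc a b)) := (hg.intervalIntegrable a b).1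
  rw [h1, h2, intervalIntegral.integral_of_le hab,
    ← ofReal_integral_eq_lintegral_ofReal hint (ae_of_all _ hgpos)]

lemma region_vol_const (cst : ℝ) :
    volume {p : (Fin m → ℝ) × (Fin n → ℝ) |
        ν₁ p.1 ^ m < cst ∧ ν₂ p.2 ^ n ∈ Set.Ioc (1/2 : ℝ) (3/2)}
      = ENNReal.ofReal cst *
        volume {x : Fin m → ℝ | ν₁ x < 1} * volume {y : Fin n → ℝ | ν₂ y < 1} := by
  rw [prod_vol_formula hm hn hν₁add hν₁smul hν₁def hν₂add hν₂smul hν₂def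
    (fun _ => cst) continuous_const _ measurableSet_Ioc]
  have h1 : Set.Ioc (1/2 : ℝ) (3/2) ∩ Set.Ici 0 = Set.Ioc (1/2 : ℝ) (3/2) :=
    Set.inter_eq_left.mpr fun x hx => le_of_lt (lt_of_le_of_lt (by norm_num) hx.1)
  rw [h1, setLIntegral_const, Real.volume_Ioc]
  norm_num

end ProdVol

/-- The set `E⁻_{T,ε}` from the paper, as a subset of `ℝ^m × ℝ^n`. -/
def Eminus (m n : ℕ) (ψ : ℝ → ℝ) (ν₁ : (Fin m → ℝ) → ℝ) (ν₂ : (Fin n → ℝ) → ℝ)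
    (ε T : ℝ) : Set ((Fin m → ℝ) × (Fin n → ℝ)) :=
  {p | ν₁ p.1 ^ m < (1 + ε)⁻¹ * ψ ((1 + ε) * ν₂ p.2 ^ n)
    ∧ 3/2 ≤ ν₂ p.2 ^ n ∧ ν₂ p.2 ^ n < (1 + ε)⁻¹ * T}

/-- The set `E'_{T,ε}` from the paper. -/
def Eprime (m n : ℕ) (ψ : ℝ → ℝ) (ν₁ : (Fin m → ℝ) → ℝ) (ν₂ : (Fin n → ℝ) → ℝ)
    (ε T : ℝ) : Set ((Fin m → ℝ) × (Fin n → ℝ)) :=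
  {p | ν₁ p.1 ^ m < (1 + ε) * ψ ((1 + ε)⁻¹ * ν₂ p.2 ^ n)
    ∧ 3/2 ≤ ν₂ p.2 ^ n ∧ ν₂ p.2 ^ n < (1 + ε) * T}

/-- The set `C₀` from the paper. -/
def Czero (m n : ℕ) (ψ : ℝ → ℝ) (ν₁ : (Fin m → ℝ) → ℝ) (ν₂ : (Fin n → ℝ) → ℝ) :
    Set ((Fin m → ℝ) × (Fin n → ℝ)) :=
  {p | ν₁ p.1 ^ m < 2 * ψ 1 ∧ 1/2 < ν₂ p.2 ^ n ∧ ν₂ p.2 ^ n ≤ 3/2}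

/-- The set `E⁺_{T,ε} = E'_{T,ε} ∪ C₀` from the paper. -/
def Eplus (m n : ℕ) (ψ : ℝ → ℝ) (ν₁ : (Fin m → ℝ) → ℝ) (ν₂ : (Fin n → ℝ) → ℝ)
    (ε T : ℝ) : Set ((Fin m → ℝ) × (Fin n → ℝ)) :=
  Eprime m n ψ ν₁ ν₂ ε T ∪ Czero m n ψ ν₁ ν₂

theorem volume_Eplus_Eminus (m n : ℕ) (hm : 1 ≤ m) (hn : 1 ≤ n)
    (ψ : ℝ → ℝ)
    (hψpos : ∀ t : ℝ, 1 ≤ t → 0 < ψ t)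
    (hψcont : ContinuousOn ψ (Set.Ici 1))
    (hψanti : AntitoneOn ψ (Set.Ici 1))
    (ν₁ : (Fin m → ℝ) → ℝ)
    (hν₁add : ∀ x y, ν₁ (x + y) ≤ ν₁ x + ν₁ y)
    (hν₁smul : ∀ (c : ℝ) x, ν₁ (c • x) = |c| * ν₁ x)
    (hν₁def : ∀ x, ν₁ x = 0 ↔ x = 0)
    (ν₂ : (Fin n → ℝ) → ℝ)
    (hν₂add : ∀ x y, ν₂ (x + y) ≤ ν₂ x + ν₂ y)
    (hν₂smul : ∀ (c : ℝ) x, ν₂ (c • x) = |c| * ν₂ x)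
    (hν₂def : ∀ x, ν₂ x = 0 ↔ x = 0) :
    ∃ C : ℝ, 0 < C ∧ ∀ ε : ℝ, 0 < ε → ε < 1/2 → ∀ T : ℝ, 10 < T →
      |(volume (Eplus m n ψ ν₁ ν₂ ε T)).toReal
        - (1 + ε) ^ 2 * (volume {x : Fin m → ℝ | ν₁ x < 1}).toReal
          * (volume {y : Fin n → ℝ | ν₂ y < 1}).toReal * ∫ r in (1:ℝ)..T, ψ r| ≤ C
      ∧
      |(volume (Eminus m n ψ ν₁ ν₂ ε T)).toReal
        - ((1 + ε) ^ 2)⁻¹ * (volume {x : Fin m → ℝ | ν₁ x < 1}).toReal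
          * (volume {y : Fin n → ℝ | ν₂ y < 1}).toReal * ∫ r in (1:ℝ)..T, ψ r| ≤ C := by
  -- the clipped version of ψ, globally continuous
  set Ψ : ℝ → ℝ := fun t => ψ (max 1 t) with hΨdef
  have hΨc : Continuous Ψ :=
    hψcont.comp_continuous (continuous_const.max continuous_id)
      (fun t => Set.mem_Ici.mpr (le_max_left 1 t))
  have hΨpos : ∀ t, 0 < Ψ t := fun t => hψpos _ (le_max_left _ _)
  have hΨle : ∀ t, Ψ t ≤ ψ 1 := fun t =>
    hψanti (Set.mem_Ici.mpr le_rfl) (Set.mem_Ici.mpr (le_max_left 1 t)) (le_max_left 1 t)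
  have hΨeq : ∀ t : ℝ, 1 ≤ t → Ψ t = ψ t := fun t ht => by
    simp only [hΨdef]; rw [max_eq_right ht]
  have hΨint : ∀ a b : ℝ, IntervalIntegrable Ψ volume a b :=
    fun a b => hΨc.intervalIntegrable a b
  set c₁ := volume {x : Fin m → ℝ | ν₁ x < 1} with hc₁
  set c₂ := volume {y : Fin n → ℝ | ν₂ y < 1} with hc₂
  have hc₁pos : 0 < c₁ := nu_vol_pos hν₁add hν₁smul hν₁def
  have hc₂pos : 0 < c₂ := nu_vol_pos hν₂add hν₂smul hν₂def
  have hc₁top : c₁ ≠ ⊤ := nu_vol_ne_top hν₁add hν₁smul hν₁def hm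
  have hc₂top : c₂ ≠ ⊤ := nu_vol_ne_top hν₂add hν₂smul hν₂def hn
  set A := c₁.toReal with hA'
  set B := c₂.toReal with hB'
  clear_value A B
  have hA : 0 < A := by rw [hA']; exact ENNReal.toReal_pos hc₁pos.ne' hc₁top
  have hB : 0 < B := by rw [hB']; exact ENNReal.toReal_pos hc₂pos.ne' hc₂top
  have hψ1 : 0 < ψ 1 := hψpos 1 le_rfl
  have hABψ : 0 < A * B * ψ 1 := mul_pos (mul_pos hA hB) hψ1
  refine ⟨4 * (A * B * ψ 1), by linarith only [hABψ], ?_⟩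
  intro ε hε0 hε T hT
  set e : ℝ := 1 + ε with he
  clear_value e
  have he0 : 0 < e := by simp only [he]; linarith
  have he1 : 1 ≤ e := by simp only [he]; linarith
  have he32 : e ≤ 3/2 := by simp only [he]; linarith
  have heinv1 : e⁻¹ ≤ 1 := inv_le_one_of_one_le₀ he1
  have heinv23 : (2:ℝ)/3 ≤ e⁻¹ := by
    have := inv_anti₀ he0 he32
    norm_num at this
    linarith
  have heinv0 : 0 < e⁻¹ := inv_pos.mpr he0
  have heT : (20:ℝ)/3 ≤ e⁻¹ * T :=
    le_trans (by norm_num) (mul_le_mul heinv23 hT.le (by norm_num) heinv0.le)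
  have heT' : (10:ℝ) ≤ e * T :=
    le_trans (by norm_num) (mul_le_mul he1 hT.le (by norm_num) he0.le)
  -- relate ∫ψ with ∫Ψ
  have hTint : (∫ r in (1:ℝ)..T, ψ r) = ∫ r in (1:ℝ)..T, Ψ r := by
    refine (intervalIntegral.integral_congr fun t ht => ?_).symm
    rw [Set.uIcc_of_le (by linarith : (1:ℝ) ≤ T)] at ht
    exact hΨeq t ht.1
  -- key interval endpoints
  set a₁ : ℝ := e * (3/2) with ha₁
  set a₂ : ℝ := e⁻¹ * (3/2) with ha₂
  clear_value a₁ a₂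
  have ha₁1 : 1 ≤ a₁ := by simp only [ha₁]; linarith only [he1]
  have ha₁54 : a₁ - 1 ≤ 5/4 := by simp only [ha₁]; linarith only [he32]
  have ha₂1 : 1 ≤ a₂ := by simp only [ha₂]; linarith only [heinv23]
  have ha₂32 : a₂ - 1 ≤ 1/2 := by simp only [ha₂]; linarith only [heinv1]
  set J₁ : ℝ := ∫ s in a₁..T, Ψ s with hJ₁
  set J₂ : ℝ := ∫ s in a₂..T, Ψ s with hJ₂
  set D₁ : ℝ := ∫ s in (1:ℝ)..a₁, Ψ s with hD₁
  set D₂ : ℝ := ∫ s in (1:ℝ)..a₂, Ψ s with hD₂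
  clear_value J₁ J₂ D₁ D₂
  have hsplit₁ : D₁ + J₁ = ∫ s in (1:ℝ)..T, Ψ s := by
    rw [hD₁, hJ₁]
    exact intervalIntegral.integral_add_adjacent_intervals (hΨint _ _) (hΨint _ _)
  have hsplit₂ : D₂ + J₂ = ∫ s in (1:ℝ)..T, Ψ s := by
    rw [hD₂, hJ₂]
    exact intervalIntegral.integral_add_adjacent_intervals (hΨint _ _) (hΨint _ _)
  have ha₁T : a₁ ≤ T := by simp only [ha₁]; linarith only [he32, hT]
  have ha₂T : a₂ ≤ T := by simp only [ha₂]; linarith only [heinv1, hT]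
  have hJ₁0 : 0 ≤ J₁ := by
    rw [hJ₁]
    exact intervalIntegral.integral_nonneg ha₁T (fun u _ => (hΨpos u).le)
  have hJ₂0 : 0 ≤ J₂ := by
    rw [hJ₂]
    exact intervalIntegral.integral_nonneg ha₂T (fun u _ => (hΨpos u).le)
  have hD₁0 : 0 ≤ D₁ := by
    rw [hD₁]
    exact intervalIntegral.integral_nonneg ha₁1 (fun u _ => (hΨpos u).le)
  have hD₂0 : 0 ≤ D₂ := by
    rw [hD₂]
    exact intervalIntegral.integral_nonneg ha₂1 (fun u _ => (hΨpos u).le)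
  have hD₁le : D₁ ≤ (a₁ - 1) * ψ 1 := by
    rw [hD₁]
    calc (∫ s in (1:ℝ)..a₁, Ψ s) ≤ ∫ _ in (1:ℝ)..a₁, ψ 1 :=
          intervalIntegral.integral_mono_on ha₁1 (hΨint _ _)
            intervalIntegrable_const (fun u _ => hΨle u)
      _ = (a₁ - 1) * ψ 1 := by rw [intervalIntegral.integral_const, smul_eq_mul]
  have hD₂le : D₂ ≤ (a₂ - 1) * ψ 1 := by
    rw [hD₂]
    calc (∫ s in (1:ℝ)..a₂, Ψ s) ≤ ∫ _ in (1:ℝ)..a₂, ψ 1 :=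
          intervalIntegral.integral_mono_on ha₂1 (hΨint _ _)
            intervalIntegrable_const (fun u _ => hΨle u)
      _ = (a₂ - 1) * ψ 1 := by rw [intervalIntegral.integral_const, smul_eq_mul]
  constructor
  · -- E⁺ estimate
    -- E′ as a region
    have hEp : Eprime m n ψ ν₁ ν₂ ε T = {p : (Fin m → ℝ) × (Fin n → ℝ) |
        ν₁ p.1 ^ m < (fun t => e * Ψ (e⁻¹ * t)) (ν₂ p.2 ^ n)
          ∧ ν₂ p.2 ^ n ∈ Set.Ico (3/2 : ℝ) (e * T)} := by
      ext p
      simp only [Eprime, Set.mem_setOf_eq, Set.mem_Ico, ← he]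
      constructor
      · rintro ⟨h1, h2, h3⟩
        refine ⟨?_, h2, h3⟩
        have hp := mul_le_mul heinv23 h2 (by norm_num : (0:ℝ) ≤ 3/2) heinv0.le
        have hone : 1 ≤ e⁻¹ * (ν₂ p.2 ^ n) := by linarith only [hp]
        rw [hΨeq _ hone]
        exact h1
      · rintro ⟨h1, h2, h3⟩
        refine ⟨?_, h2, h3⟩
        have hp := mul_le_mul heinv23 h2 (by norm_num : (0:ℝ) ≤ 3/2) heinv0.le
        have hone : 1 ≤ e⁻¹ * (ν₂ p.2 ^ n) := by linarith only [hp]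
        rw [hΨeq _ hone] at h1
        exact h1
    have hvolEp : volume (Eprime m n ψ ν₁ ν₂ ε T)
        = ENNReal.ofReal (∫ t in (3/2 : ℝ)..(e * T), e * Ψ (e⁻¹ * t)) * c₁ * c₂ := by
      rw [hEp]
      exact region_vol hm hn hν₁add hν₁smul hν₁def hν₂add hν₂smul hν₂def
        (fun t => e * Ψ (e⁻¹ * t))
        (continuous_const.mul (hΨc.comp (continuous_const.mul continuous_id)))
        (fun t => mul_nonneg he0.le (hΨpos _).le) (by norm_num)
        (by linarith only [heT'])
    have hIp : (∫ t in (3/2 : ℝ)..(e * T), e * Ψ (e⁻¹ * t)) = e * (e * J₂) := by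
      rw [intervalIntegral.integral_const_mul]
      congr 1
      rw [intervalIntegral.integral_comp_mul_left Ψ (ne_of_gt heinv0), smul_eq_mul, inv_inv]
      congr 1
      rw [hJ₂, ha₂]
      congr 1
      field_simp
    have hvolC : volume (Czero m n ψ ν₁ ν₂) = ENNReal.ofReal (2 * ψ 1) * c₁ * c₂ := by
      have : Czero m n ψ ν₁ ν₂ = {p : (Fin m → ℝ) × (Fin n → ℝ) |
          ν₁ p.1 ^ m < 2 * ψ 1 ∧ ν₂ p.2 ^ n ∈ Set.Ioc (1/2 : ℝ) (3/2)} := by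
        ext p
        simp only [Czero, Set.mem_setOf_eq, Set.mem_Ioc]
      rw [this]
      exact region_vol_const hm hn hν₁add hν₁smul hν₁def hν₂add hν₂smul hν₂def (2 * ψ 1)
    have hfinEp : volume (Eprime m n ψ ν₁ ν₂ ε T) ≠ ⊤ := by
      rw [hvolEp]
      exact ENNReal.mul_ne_top (ENNReal.mul_ne_top ENNReal.ofReal_ne_top hc₁top) hc₂top
    have hfinC : volume (Czero m n ψ ν₁ ν₂) ≠ ⊤ := by
      rw [hvolC]
      exact ENNReal.mul_ne_top (ENNReal.mul_ne_top ENNReal.ofReal_ne_top hc₁top) hc₂top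
    have hfinPlus : volume (Eplus m n ψ ν₁ ν₂ ε T) ≠ ⊤ := by
      refine ne_top_of_le_ne_top ?_ (measure_union_le _ _)
      exact ENNReal.add_ne_top.mpr ⟨hfinEp, hfinC⟩
    have hPval : (volume (Eprime m n ψ ν₁ ν₂ ε T)).toReal = e * (e * J₂) * A * B := by
      rw [hvolEp, ENNReal.toReal_mul, ENNReal.toReal_mul,
        ENNReal.toReal_ofReal (by rw [hIp]; exact mul_nonneg he0.le (mul_nonneg he0.le hJ₂0)),
        hIp, ← hA', ← hB']
    have hZval : (volume (Czero m n ψ ν₁ ν₂)).toReal = 2 * ψ 1 * A * B := by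
      rw [hvolC, ENNReal.toReal_mul, ENNReal.toReal_mul,
        ENNReal.toReal_ofReal (by positivity), ← hA', ← hB']
    have hQ1 : (volume (Eprime m n ψ ν₁ ν₂ ε T)).toReal
        ≤ (volume (Eplus m n ψ ν₁ ν₂ ε T)).toReal :=
      ENNReal.toReal_le_toReal hfinEp hfinPlus |>.mpr (measure_mono Set.subset_union_left)
    have hQ2 : (volume (Eplus m n ψ ν₁ ν₂ ε T)).toReal
        ≤ (volume (Eprime m n ψ ν₁ ν₂ ε T)).toReal + (volume (Czero m n ψ ν₁ ν₂)).toReal := by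
      calc (volume (Eplus m n ψ ν₁ ν₂ ε T)).toReal
          ≤ (volume (Eprime m n ψ ν₁ ν₂ ε T) + volume (Czero m n ψ ν₁ ν₂)).toReal :=
            ENNReal.toReal_mono (ENNReal.add_ne_top.mpr ⟨hfinEp, hfinC⟩) (measure_union_le _ _)
        _ = _ := ENNReal.toReal_add hfinEp hfinC
    rw [hPval, hZval] at hQ2
    rw [hPval] at hQ1
    rw [hTint, ← hsplit₂]
    have he94 : e ^ 2 ≤ 9/4 := by
      calc e ^ 2 ≤ (3/2 : ℝ) ^ 2 := pow_le_pow_left₀ he0.le he32 2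
        _ = 9/4 := by norm_num
    have hD₂12 : D₂ ≤ (1/2) * ψ 1 := by
      have h := mul_le_mul_of_nonneg_right ha₂32 hψ1.le
      linarith only [hD₂le, h]
    have hkey : e ^ 2 * (A * B) * D₂ ≤ (9/8) * (A * B * ψ 1) := by
      have h1 : e ^ 2 * D₂ ≤ (9/4) * ((1/2) * ψ 1) :=
        mul_le_mul he94 hD₂12 hD₂0 (by norm_num)
      have h2 := mul_le_mul_of_nonneg_left h1 (mul_pos hA hB).le
      linarith only [h2]
    have hpos2 : 0 ≤ e ^ 2 * (A * B) * D₂ :=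
      mul_nonneg (mul_nonneg (sq_nonneg e) (mul_pos hA hB).le) hD₂0
    rw [abs_le]
    constructor
    · linarith only [hQ1, hkey, hABψ]
    · linarith only [hQ2, hpos2, hABψ]
  · -- E⁻ estimate
    have hEm : Eminus m n ψ ν₁ ν₂ ε T = {p : (Fin m → ℝ) × (Fin n → ℝ) |
        ν₁ p.1 ^ m < (fun t => e⁻¹ * Ψ (e * t)) (ν₂ p.2 ^ n)
          ∧ ν₂ p.2 ^ n ∈ Set.Ico (3/2 : ℝ) (e⁻¹ * T)} := by
      ext p
      simp only [Eminus, Set.mem_setOf_eq, Set.mem_Ico, ← he]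
      constructor
      · rintro ⟨h1, h2, h3⟩
        refine ⟨?_, h2, h3⟩
        have hp := mul_le_mul he1 h2 (by norm_num : (0:ℝ) ≤ 3/2) he0.le
        have hone : 1 ≤ e * (ν₂ p.2 ^ n) := by linarith only [hp]
        rw [hΨeq _ hone]
        exact h1
      · rintro ⟨h1, h2, h3⟩
        refine ⟨?_, h2, h3⟩
        have hp := mul_le_mul he1 h2 (by norm_num : (0:ℝ) ≤ 3/2) he0.le
        have hone : 1 ≤ e * (ν₂ p.2 ^ n) := by linarith only [hp]
        rw [hΨeq _ hone] at h1
        exact h1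
    have hvolEm : volume (Eminus m n ψ ν₁ ν₂ ε T)
        = ENNReal.ofReal (∫ t in (3/2 : ℝ)..(e⁻¹ * T), e⁻¹ * Ψ (e * t)) * c₁ * c₂ := by
      rw [hEm]
      exact region_vol hm hn hν₁add hν₁smul hν₁def hν₂add hν₂smul hν₂def
        (fun t => e⁻¹ * Ψ (e * t))
        (continuous_const.mul (hΨc.comp (continuous_const.mul continuous_id)))
        (fun t => mul_nonneg heinv0.le (hΨpos _).le) (by norm_num)
        (by linarith only [heT])
    have hIm : (∫ t in (3/2 : ℝ)..(e⁻¹ * T), e⁻¹ * Ψ (e * t)) = e⁻¹ * (e⁻¹ * J₁) := by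
      rw [intervalIntegral.integral_const_mul]
      congr 1
      rw [intervalIntegral.integral_comp_mul_left Ψ (ne_of_gt he0), smul_eq_mul]
      congr 1
      rw [hJ₁, ha₁]
      congr 1
      field_simp
    have hMval : (volume (Eminus m n ψ ν₁ ν₂ ε T)).toReal = e⁻¹ * (e⁻¹ * J₁) * A * B := by
      rw [hvolEm, ENNReal.toReal_mul, ENNReal.toReal_mul,
        ENNReal.toReal_ofReal (by rw [hIm]; exact mul_nonneg heinv0.le (mul_nonneg heinv0.le hJ₁0)),
        hIm, ← hA', ← hB']
    rw [hTint, ← hsplit₁, hMval]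
    have heq : e⁻¹ * (e⁻¹ * J₁) * A * B - (e ^ 2)⁻¹ * A * B * (D₁ + J₁)
        = -((e ^ 2)⁻¹ * (A * B) * D₁) := by
      rw [sq, mul_inv]
      ring
    rw [heq, abs_neg, abs_of_nonneg (mul_nonneg (mul_nonneg (inv_nonneg.mpr (sq_nonneg e))
      (mul_pos hA hB).le) hD₁0)]
    have hinv1 : (e ^ 2)⁻¹ ≤ 1 := by
      refine inv_le_one_of_one_le₀ ?_
      calc (1:ℝ) = 1 ^ 2 := by norm_num
        _ ≤ e ^ 2 := pow_le_pow_left₀ (by norm_num) he1 2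
    have hD₁54 : D₁ ≤ (5/4) * ψ 1 := by
      have h := mul_le_mul_of_nonneg_right ha₁54 hψ1.le
      linarith only [hD₁le, h]
    have h1 : (e ^ 2)⁻¹ * D₁ ≤ 1 * ((5/4) * ψ 1) :=
      mul_le_mul hinv1 hD₁54 hD₁0 (by norm_num)
    have h2 := mul_le_mul_of_nonneg_left h1 (mul_pos hA hB).le
    linarith only [h2, hABψ]
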